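/- Let X, Y be compact metric spaces such that (X, Y) is a strongly plastic pair, i.e. every noncontractive map f : X → Y is an isometric embedding. Then (X, Y) is uniformly strongly plastic: for every ε > 0 there exists δ > 0 such that for every map f : X → Y, if there are x, y ∈ X with d(f(x), f(y)) > d(x, y) + ε, then there are x̃, ỹ ∈ X with d(f(x̃), f(ỹ)) < d(x̃, ỹ) − δ. -/

import Mathlib

open Filter Topology

private lemma exists_ultrafilter_limit {Z : Type*} [TopologicalSpace Z] [CompactSpace Z]
    (U : Ultrafilter ℕ) (u : ℕ → Z) : ∃ p, Filter.Tendsto u (↑U) (𝓝 p) := by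
  obtain ⟨p, -, hp⟩ := isCompact_univ.ultrafilter_le_nhds (U.map u)
    (by simp [Filter.le_principal_iff])
  exact ⟨p, by rwa [Filter.Tendsto, ← Ultrafilter.coe_map]⟩

theorem compact_strongly_plastic_pair_is_uniform
    (X Y : Type*) [MetricSpace X] [MetricSpace Y]
    [CompactSpace X] [CompactSpace Y]
    (hsp : ∀ f : X → Y, (∀ x y : X, dist x y ≤ dist (f x) (f y)) →
      ∀ x y : X, dist (f x) (f y) = dist x y) :
    ∀ ε : ℝ, 0 < ε → ∃ δ : ℝ, 0 < δ ∧
      ∀ f : X → Y, (∃ x y : X, dist (f x) (f y) > dist x y + ε) →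
        ∃ x y : X, dist (f x) (f y) < dist x y - δ := by
  classical
  intro ε hε
  by_contra h
  push_neg at h
  -- extract maps F n expanding some pair by ε, contracting nothing by more than 1/(n+1)
  have h' : ∀ n : ℕ, ∃ f : X → Y, (∃ x y : X, dist (f x) (f y) > dist x y + ε) ∧
      ∀ x y : X, dist x y - 1 / (n + 1) ≤ dist (f x) (f y) := by
    intro n
    obtain ⟨f, hf1, hf2⟩ := h (1 / (n + 1)) (by positivity)
    exact ⟨f, hf1, hf2⟩
  choose F hF1 hF2 using h'
  choose xs ys hxy using hF1
  -- an ultrafilter extending atTop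
  let U : Ultrafilter ℕ := Ultrafilter.of Filter.atTop
  have hUle : (↑U : Filter ℕ) ≤ Filter.atTop := Ultrafilter.of_le _
  have hinv : Filter.Tendsto (fun n : ℕ => -(1 / (n + 1 : ℝ))) (↑U) (𝓝 0) := by
    have := (tendsto_one_div_add_atTop_nhds_zero_nat (𝕜 := ℝ)).neg.mono_left hUle
    simpa using this
  -- limits of the expanding pairs
  obtain ⟨xt, hxt⟩ := exists_ultrafilter_limit U xs
  obtain ⟨yt, hyt⟩ := exists_ultrafilter_limit U ys
  -- pointwise limit map and limits of images of the expanding pairs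
  choose L hL using fun x => exists_ultrafilter_limit U (fun n => F n x)
  obtain ⟨xa, hxa⟩ := exists_ultrafilter_limit U (fun n => F n (xs n))
  obtain ⟨ya, hya⟩ := exists_ultrafilter_limit U (fun n => F n (ys n))
  -- the two limit maps
  set g : X → Y := Function.update L xt xa with hg_def
  set φ : X → Y := Function.update g yt ya with hφ_def
  -- each value of g (resp. φ) is an ultrafilter limit along a suitable sequence
  have hgl : ∀ x : X, ∃ u : ℕ → X, Filter.Tendsto u (↑U) (𝓝 x) ∧
      Filter.Tendsto (fun n => F n (u n)) (↑U) (𝓝 (g x)) := by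
    intro x
    by_cases hx : x = xt
    · subst hx
      exact ⟨xs, hxt, by simpa [hg_def] using hxa⟩
    · exact ⟨fun _ => x, tendsto_const_nhds, by simpa [hg_def, Function.update_of_ne hx] using hL x⟩
  have hφl : ∀ x : X, ∃ u : ℕ → X, Filter.Tendsto u (↑U) (𝓝 x) ∧
      Filter.Tendsto (fun n => F n (u n)) (↑U) (𝓝 (φ x)) := by
    intro x
    by_cases hx : x = yt
    · subst hx
      exact ⟨ys, hyt, by simpa [hφ_def] using hya⟩
    · obtain ⟨u, hu1, hu2⟩ := hgl x
      exact ⟨u, hu1, by simpa [hφ_def, Function.update_of_ne hx] using hu2⟩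
  -- key limiting inequality
  have key : ∀ (u v : ℕ → X) (a b : X) (A B : Y) (c : ℕ → ℝ) (c0 : ℝ),
      Filter.Tendsto u (↑U) (𝓝 a) → Filter.Tendsto v (↑U) (𝓝 b) →
      Filter.Tendsto (fun n => F n (u n)) (↑U) (𝓝 A) →
      Filter.Tendsto (fun n => F n (v n)) (↑U) (𝓝 B) →
      Filter.Tendsto c (↑U) (𝓝 c0) →
      (∀ n, dist (u n) (v n) + c n ≤ dist (F n (u n)) (F n (v n))) →
      dist a b + c0 ≤ dist A B := by
    intro u v a b A B c c0 hu hv hA hB hc hle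
    exact le_of_tendsto_of_tendsto' ((hu.dist hv).add hc) (hA.dist hB) hle
  -- g and φ are noncontractive, hence isometries
  have hg_nc : ∀ x z : X, dist x z ≤ dist (g x) (g z) := by
    intro x z
    obtain ⟨u, hu1, hu2⟩ := hgl x
    obtain ⟨v, hv1, hv2⟩ := hgl z
    have := key u v x z (g x) (g z) (fun n => -(1 / (n + 1))) 0 hu1 hv1 hu2 hv2 hinv
      (fun n => by have := hF2 n (u n) (v n); linarith)
    linarith
  have hφ_nc : ∀ x z : X, dist x z ≤ dist (φ x) (φ z) := by
    intro x z
    obtain ⟨u, hu1, hu2⟩ := hφl x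
    obtain ⟨v, hv1, hv2⟩ := hφl z
    have := key u v x z (φ x) (φ z) (fun n => -(1 / (n + 1))) 0 hu1 hv1 hu2 hv2 hinv
      (fun n => by have := hF2 n (u n) (v n); linarith)
    linarith
  have hg_iso := hsp g hg_nc
  have hφ_iso := hsp φ hφ_nc
  -- the expansion survives in the limit: dist xt yt + ε ≤ dist (g xt) (φ yt)
  have hgxt : g xt = xa := by simp [hg_def]
  have hφyt : φ yt = ya := by simp [hφ_def]
  have hexp : dist xt yt + ε ≤ dist (g xt) (φ yt) := by
    rw [hgxt, hφyt]
    exact key xs ys xt yt xa ya (fun _ => ε) ε hxt hyt hxa hya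
      tendsto_const_nhds (fun n => le_of_lt (hxy n))
  by_cases hne : xt = yt
  · -- degenerate case: xt = yt; use a nearby point z ≠ xt
    subst hne
    have hev : ∀ᶠ n in (↑U : Filter ℕ), dist (xs n) xt < ε / 8 ∧ dist (ys n) xt < ε / 8 := by
      have h1 := (Metric.tendsto_nhds.1 hxt) (ε / 8) (by positivity)
      have h2 := (Metric.tendsto_nhds.1 hyt) (ε / 8) (by positivity)
      exact h1.and h2
    obtain ⟨n, hn1, hn2⟩ := hev.exists
    have hxsys : xs n ≠ ys n := by
      intro hcontra
      have := hxy n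
      rw [hcontra] at this
      simp at this
      linarith
    obtain ⟨z, hz, hzd⟩ : ∃ z : X, z ≠ xt ∧ dist z xt < ε / 8 := by
      by_cases hx : xs n = xt
      · exact ⟨ys n, by rw [← hx]; exact fun hc => hxsys hc.symm, hn2⟩
      · exact ⟨xs n, hx, hn1⟩
    have hφz : φ z = g z := by
      rw [hφ_def]; exact Function.update_of_ne hz _ _
    have e1 : dist (g xt) (g z) = dist xt z := hg_iso xt z
    have e2 : dist (φ z) (φ xt) = dist z xt := hφ_iso z xt
    have htri : dist (g xt) (φ xt) ≤ dist (g xt) (g z) + dist (φ z) (φ xt) := by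
      calc dist (g xt) (φ xt) ≤ dist (g xt) (g z) + dist (g z) (φ xt) := dist_triangle _ _ _
        _ = dist (g xt) (g z) + dist (φ z) (φ xt) := by rw [hφz]
    rw [e1, e2] at htri
    rw [dist_self] at hexp
    rw [dist_comm xt z] at htri
    linarith
  · -- main case: xt ≠ yt
    have hφxt : φ xt = g xt := by
      rw [hφ_def]; exact Function.update_of_ne hne _ _
    have hiso := hφ_iso xt yt
    rw [hφxt] at hiso
    rw [hiso] at hexp
    linarith
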